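/- Let p > 3 be a prime and F a field of characteristic p equipped with a discrete valuation v : F → ℤ ∪ {∞}. Let a₄, a₆ ∈ F with v(a₄) ≥ 0 and v(a₆) ≥ 0, let ι ≥ 1 be an integer, and let x, y ∈ F satisfy y² = x³ + a₄·x + a₆ with v(x) = −2ι and v(y) = −3ι. With A, L as in the Hasse invariant decomposition of (X³ + a₄X + a₆)^((p−1)/2) evaluated at a₄, a₆, x, and ℘_A(z) = z^p − A·z, one has v( ℘_A((a₄·x + 3a₆)/(3xy)) ) ≥ 3ι and v( y·L(x)/x^p ) ≥ ι. -/

import Mathlib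

open Polynomial

section Aux

variable {F : Type*} [Field F] {v : F → WithTop ℤ}

private lemma aux_v_zero (hv0 : ∀ a : F, v a = ⊤ ↔ a = 0) : v (0 : F) = ⊤ := (hv0 0).2 rfl

private lemma aux_v_one (hv0 : ∀ a : F, v a = ⊤ ↔ a = 0)
    (hvmul : ∀ a b, v (a * b) = v a + v b) : v (1 : F) = 0 := by
  have h := hvmul 1 1
  rw [mul_one] at h
  have hne : v (1 : F) ≠ ⊤ := fun ht => one_ne_zero ((hv0 1).1 ht)
  obtain ⟨n, hn⟩ := WithTop.ne_top_iff_exists.1 hne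
  rw [← hn] at h ⊢
  norm_cast at h ⊢
  omega

private lemma aux_v_neg (hv0 : ∀ a : F, v a = ⊤ ↔ a = 0)
    (hvmul : ∀ a b, v (a * b) = v a + v b) (a : F) : v (-a) = v a := by
  have hm1 : v (-1 : F) = 0 := by
    have h := hvmul (-1) (-1)
    rw [neg_mul_neg, one_mul, aux_v_one hv0 hvmul] at h
    have hne : v (-1 : F) ≠ ⊤ := fun ht => by
      have := (hv0 (-1)).1 ht; simpa using this
    obtain ⟨n, hn⟩ := WithTop.ne_top_iff_exists.1 hne
    rw [← hn] at h ⊢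
    norm_cast at h ⊢
    omega
  have := hvmul (-1) a
  rw [neg_one_mul, hm1, zero_add] at this
  exact this

private lemma aux_v_sub (hv0 : ∀ a : F, v a = ⊤ ↔ a = 0)
    (hvmul : ∀ a b, v (a * b) = v a + v b)
    (hvadd : ∀ a b, min (v a) (v b) ≤ v (a + b))
    {a b : F} {c : WithTop ℤ} (ha : c ≤ v a) (hb : c ≤ v b) : c ≤ v (a - b) := by
  rw [sub_eq_add_neg]
  refine le_trans (le_min ha ?_) (hvadd a (-b))
  rw [aux_v_neg hv0 hvmul]; exact hb

private lemma aux_v_sum (hv0 : ∀ a : F, v a = ⊤ ↔ a = 0)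
    (hvadd : ∀ a b, min (v a) (v b) ≤ v (a + b))
    {α : Type*} (s : Finset α) (f : α → F) (c : WithTop ℤ)
    (h : ∀ i ∈ s, c ≤ v (f i)) : c ≤ v (∑ i ∈ s, f i) := by
  classical
  induction s using Finset.induction with
  | empty => simp [aux_v_zero hv0]
  | @insert b t hmem ih =>
    rw [Finset.sum_insert hmem]
    refine le_trans (le_min (h b (by simp)) ?_) (hvadd _ _)
    exact ih fun i hi => h i (by simp [hi])

private lemma aux_v_natCast (hv0 : ∀ a : F, v a = ⊤ ↔ a = 0)
    (hvmul : ∀ a b, v (a * b) = v a + v b)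
    (hvadd : ∀ a b, min (v a) (v b) ≤ v (a + b))
    (n : ℕ) : 0 ≤ v (n : F) := by
  induction n with
  | zero => simp [aux_v_zero hv0]
  | succ n ih =>
    push_cast
    refine le_trans (le_min ih ?_) (hvadd _ _)
    rw [aux_v_one hv0 hvmul]

private lemma aux_v_pow_eq (hv0 : ∀ a : F, v a = ⊤ ↔ a = 0)
    (hvmul : ∀ a b, v (a * b) = v a + v b)
    {a : F} {c : ℤ} (h : v a = (c : WithTop ℤ)) (n : ℕ) :
    v (a ^ n) = (((n : ℤ) * c : ℤ) : WithTop ℤ) := by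
  induction n with
  | zero => simp [aux_v_one hv0 hvmul]
  | succ n ih =>
    rw [pow_succ, hvmul, ih, h, ← WithTop.coe_add]
    congr 1
    push_cast
    ring

private lemma aux_v_inv (hv0 : ∀ a : F, v a = ⊤ ↔ a = 0)
    (hvmul : ∀ a b, v (a * b) = v a + v b)
    {a : F} {c : ℤ} (h : v a = (c : WithTop ℤ)) : v a⁻¹ = ((-c : ℤ) : WithTop ℤ) := by
  have ha : a ≠ 0 := fun h0 => by
    rw [h0, aux_v_zero hv0] at h; exact (WithTop.top_ne_coe h)
  have hinv : a⁻¹ ≠ 0 := inv_ne_zero ha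
  have hne : v a⁻¹ ≠ ⊤ := fun ht => hinv ((hv0 _).1 ht)
  obtain ⟨d, hd⟩ := WithTop.ne_top_iff_exists.1 hne
  have h1 : v (a * a⁻¹) = 0 := by rw [mul_inv_cancel₀ ha, aux_v_one hv0 hvmul]
  rw [hvmul, h, ← hd] at h1
  rw [← hd]
  norm_cast at h1 ⊢
  omega

private lemma aux_v_pow_nonneg (hv0 : ∀ a : F, v a = ⊤ ↔ a = 0)
    (hvmul : ∀ a b, v (a * b) = v a + v b)
    {a : F} (h : 0 ≤ v a) (n : ℕ) : 0 ≤ v (a ^ n) := by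
  induction n with
  | zero => simp [aux_v_one hv0 hvmul]
  | succ n ih =>
    rw [pow_succ, hvmul]
    exact add_nonneg ih h

/-- Polynomials all of whose coefficients have nonnegative valuation. -/
private def Good (v : F → WithTop ℤ) (q : Polynomial F) : Prop := ∀ i, 0 ≤ v (q.coeff i)

private lemma good_add (hv0 : ∀ a : F, v a = ⊤ ↔ a = 0)
    (hvadd : ∀ a b, min (v a) (v b) ≤ v (a + b))
    {q r : Polynomial F} (hq : Good v q) (hr : Good v r) : Good v (q + r) := by
  intro i
  rw [Polynomial.coeff_add]
  exact le_trans (le_min (hq i) (hr i)) (hvadd _ _)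

private lemma good_mul (hv0 : ∀ a : F, v a = ⊤ ↔ a = 0)
    (hvmul : ∀ a b, v (a * b) = v a + v b)
    (hvadd : ∀ a b, min (v a) (v b) ≤ v (a + b))
    {q r : Polynomial F} (hq : Good v q) (hr : Good v r) : Good v (q * r) := by
  intro i
  rw [Polynomial.coeff_mul]
  refine aux_v_sum hv0 hvadd _ _ _ fun ij _ => ?_
  rw [hvmul]
  exact add_nonneg (hq _) (hr _)

private lemma good_C (hv0 : ∀ a : F, v a = ⊤ ↔ a = 0)
    {a : F} (ha : 0 ≤ v a) : Good v (Polynomial.C a) := by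
  intro i
  rw [Polynomial.coeff_C]
  split
  · exact ha
  · simp [aux_v_zero hv0]

private lemma good_X (hv0 : ∀ a : F, v a = ⊤ ↔ a = 0)
    (hvmul : ∀ a b, v (a * b) = v a + v b) : Good v (Polynomial.X : Polynomial F) := by
  intro i
  rw [Polynomial.coeff_X]
  split
  · rw [aux_v_one hv0 hvmul]
  · simp [aux_v_zero hv0]

private lemma good_one (hv0 : ∀ a : F, v a = ⊤ ↔ a = 0)
    (hvmul : ∀ a b, v (a * b) = v a + v b) : Good v (1 : Polynomial F) := by
  intro i
  rw [Polynomial.coeff_one]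
  split
  · rw [aux_v_one hv0 hvmul]
  · simp [aux_v_zero hv0]

private lemma good_pow (hv0 : ∀ a : F, v a = ⊤ ↔ a = 0)
    (hvmul : ∀ a b, v (a * b) = v a + v b)
    (hvadd : ∀ a b, min (v a) (v b) ≤ v (a + b))
    {q : Polynomial F} (hq : Good v q) (n : ℕ) : Good v (q ^ n) := by
  induction n with
  | zero => simpa using good_one hv0 hvmul
  | succ n ih =>
    rw [pow_succ]
    exact good_mul hv0 hvmul hvadd ih hq

end Aux

/-- Let `p > 3` be a prime and `F` a field of characteristic `p` equipped with
a discrete valuation `v : F → ℤ ∪ {∞}`.  Let `a₄, a₆ ∈ F` with `v(a₄) ≥ 0` and `v(a₆) ≥ 0`,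
let `ι ≥ 1` be an integer, and let `x, y ∈ F` satisfy `y² = x³ + a₄·x + a₆` with `v(x) = −2ι`
and `v(y) = −3ι`.  With `A`, `L` as in the Hasse invariant decomposition of
`(X³ + a₄X + a₆)^((p−1)/2)` evaluated at `a₄, a₆, x`, and `℘_A(z) = z^p − A·z`, one has
`v( ℘_A((a₄·x + 3a₆)/(3xy)) ) ≥ 3ι` and `v( y·L(x)/x^p ) ≥ ι`. -/
theorem stmt_5 (p : ℕ) (hp : p.Prime) (hp3 : 3 < p)
    (F : Type*) [Field F] [CharP F p]
    (v : F → WithTop ℤ)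
    (hv0 : ∀ a, v a = ⊤ ↔ a = 0)
    (hvmul : ∀ a b, v (a * b) = v a + v b)
    (hvadd : ∀ a b, min (v a) (v b) ≤ v (a + b))
    (a₄ a₆ : F) (ha₄ : 0 ≤ v a₄) (ha₆ : 0 ≤ v a₆)
    (ι : ℤ) (hι : 1 ≤ ι)
    (x y : F) (hcurve : y ^ 2 = x ^ 3 + a₄ * x + a₆)
    (hvx : v x = ((-2 * ι : ℤ) : WithTop ℤ)) (hvy : v y = ((-3 * ι : ℤ) : WithTop ℤ)) :
    let P : Polynomial F :=
      (Polynomial.X ^ 3 + Polynomial.C a₄ * Polynomial.X + Polynomial.C a₆) ^ ((p - 1) / 2)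
    let A : F := P.coeff (p - 1)
    let L : Polynomial F :=
      Polynomial.modByMonic P (Polynomial.X ^ p) - Polynomial.C A * Polynomial.X ^ (p - 1)
    let wA : F → F := fun z => z ^ p - A * z
    ((3 * ι : ℤ) : WithTop ℤ) ≤ v (wA ((a₄ * x + 3 * a₆) / (3 * x * y))) ∧
      ((ι : ℤ) : WithTop ℤ) ≤ v (y * L.eval x / x ^ p) := by
  intro P A L wA
  have hp4 : 4 ≤ p := hp3
  have hvzero := aux_v_zero hv0
  have hvone := aux_v_one hv0 hvmul
  have hx0 : x ≠ 0 := by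
    intro h; rw [h, hvzero] at hvx; exact WithTop.top_ne_coe hvx
  have hy0 : y ≠ 0 := by
    intro h; rw [h, hvzero] at hvy; exact WithTop.top_ne_coe hvy
  -- the valuation of 3 is zero
  haveI : Fact p.Prime := ⟨hp⟩
  have h3Z : (3 : ZMod p) ≠ 0 := by
    have h : ((3 : ℕ) : ZMod p) ≠ 0 := by
      rw [Ne, ZMod.natCast_eq_zero_iff]
      intro hdvd
      have := Nat.le_of_dvd (by norm_num) hdvd
      omega
    simpa using h
  set k : ℕ := ((3 : ZMod p)⁻¹).val with hk
  have hkZ : ((k : ℕ) : ZMod p) = (3 : ZMod p)⁻¹ := ZMod.natCast_rightInverse _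
  have hmulZ : ((3 : ℕ) : ZMod p) * ((k : ℕ) : ZMod p) = 1 := by
    rw [hkZ]
    push_cast
    exact mul_inv_cancel₀ h3Z
  have hmulF : ((3 : ℕ) : F) * ((k : ℕ) : F) = 1 := by
    have h := congrArg (ZMod.castHom (dvd_refl p) F) hmulZ
    rw [map_mul, map_natCast, map_natCast, map_one] at h
    exact h
  have h3ne : v ((3 : ℕ) : F) ≠ ⊤ := by
    intro ht
    rw [(hv0 _).1 ht, zero_mul] at hmulF
    exact zero_ne_one hmulF
  have hkne : v ((k : ℕ) : F) ≠ ⊤ := by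
    intro ht
    rw [(hv0 _).1 ht, mul_zero] at hmulF
    exact zero_ne_one hmulF
  have h1 : v ((3 : ℕ) : F) + v ((k : ℕ) : F) = 0 := by
    rw [← hvmul, hmulF, hvone]
  have ha3 := aux_v_natCast hv0 hvmul hvadd 3
  have hak := aux_v_natCast hv0 hvmul hvadd k
  have hv3' : v ((3 : ℕ) : F) = 0 := by
    obtain ⟨m, hm⟩ := WithTop.ne_top_iff_exists.1 h3ne
    obtain ⟨n, hn⟩ := WithTop.ne_top_iff_exists.1 hkne
    rw [← hm, ← hn] at h1
    rw [← hm] at ha3 ⊢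
    rw [← hn] at hak
    norm_cast at h1 ha3 hak ⊢
    omega
  have hv3 : v (3 : F) = 0 := by
    rw [show (3 : F) = ((3 : ℕ) : F) by norm_num]
    exact hv3'
  have h3F : (3 : F) ≠ 0 := by
    intro h
    rw [h, hvzero] at hv3
    simp at hv3
  -- P has good coefficients
  have hgood : Good v P :=
    good_pow hv0 hvmul hvadd
      (good_add hv0 hvadd
        (good_add hv0 hvadd (good_pow hv0 hvmul hvadd (good_X hv0 hvmul) 3)
          (good_mul hv0 hvmul hvadd (good_C hv0 ha₄) (good_X hv0 hvmul)))
        (good_C hv0 ha₆)) _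
  have hA : 0 ≤ v A := hgood (p - 1)
  -- the remainder R
  set R : Polynomial F := P %ₘ (Polynomial.X ^ p) with hR
  have hmon : (Polynomial.X ^ p : Polynomial F).Monic := Polynomial.monic_X_pow p
  have hRdeg : R.degree < (p : WithBot ℕ) := by
    have h := Polynomial.degree_modByMonic_lt P hmon
    rwa [Polynomial.degree_X_pow] at h
  have hRhigh : ∀ i, p ≤ i → R.coeff i = 0 := by
    intro i hi
    exact Polynomial.coeff_eq_zero_of_degree_lt
      (lt_of_lt_of_le hRdeg (by exact_mod_cast hi))
  have hRlow : ∀ i, i < p → R.coeff i = P.coeff i := by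
    intro i hi
    have h := congrArg (fun q => Polynomial.coeff q i) (Polynomial.modByMonic_add_div P (Polynomial.X ^ p))
    simp only [Polynomial.coeff_add] at h
    rw [mul_comm, Polynomial.coeff_mul_X_pow', if_neg (by omega)] at h
    simpa using h
  have hRgood : ∀ i, 0 ≤ v (R.coeff i) := by
    intro i
    rcases lt_or_ge i p with hi | hi
    · rw [hRlow i hi]; exact hgood i
    · rw [hRhigh i hi]; simp [hvzero]
  have hLcoeff : ∀ i, L.coeff i = R.coeff i - A * (if i = p - 1 then 1 else 0) := by
    intro i
    rw [Polynomial.coeff_sub, Polynomial.coeff_C_mul, Polynomial.coeff_X_pow]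
  have hLgood : ∀ i, 0 ≤ v (L.coeff i) := by
    intro i
    rw [hLcoeff i]
    refine aux_v_sub hv0 hvmul hvadd (hRgood i) ?_
    split
    · rw [mul_one]; exact hA
    · rw [mul_zero]; simp [hvzero]
  have hLdeg : L.natDegree < p - 1 := by
    have hle : L.natDegree ≤ p - 2 := by
      rw [Polynomial.natDegree_le_iff_coeff_eq_zero]
      intro N hN
      rw [hLcoeff N]
      rcases eq_or_ne N (p - 1) with h | h
      · rw [if_pos h, mul_one, h, hRlow (p - 1) (by omega)]
        exact sub_eq_zero_of_eq rfl
      · rw [if_neg h, mul_zero, hRhigh N (by omega), sub_zero]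
    omega
  constructor
  · -- first goal
    show ((3 * ι : ℤ) : WithTop ℤ) ≤
      v (((a₄ * x + 3 * a₆) / (3 * x * y)) ^ p - A * ((a₄ * x + 3 * a₆) / (3 * x * y)))
    set u : F := (a₄ * x + 3 * a₆) / (3 * x * y) with hu
    have hnum : ((-2 * ι : ℤ) : WithTop ℤ) ≤ v (a₄ * x + 3 * a₆) := by
      refine le_trans (le_min ?_ ?_) (hvadd _ _)
      · rw [hvmul, hvx]
        calc ((-2 * ι : ℤ) : WithTop ℤ) = 0 + ((-2 * ι : ℤ) : WithTop ℤ) := (zero_add _).symm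
        _ ≤ v a₄ + ((-2 * ι : ℤ) : WithTop ℤ) := add_le_add ha₄ le_rfl
      · rw [hvmul, hv3, zero_add]
        refine le_trans ?_ ha₆
        exact_mod_cast (by linarith : (-2 * ι : ℤ) ≤ 0)
    have hden : v (3 * x * y) = ((-5 * ι : ℤ) : WithTop ℤ) := by
      rw [hvmul, hvmul, hv3, zero_add, hvx, hvy, ← WithTop.coe_add]
      congr 1
      ring
    have hdinv : v ((3 * x * y)⁻¹) = ((5 * ι : ℤ) : WithTop ℤ) := by
      have h := aux_v_inv hv0 hvmul hden
      rw [h]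
      congr 1
      ring
    have huv : ((3 * ι : ℤ) : WithTop ℤ) ≤ v u := by
      rw [hu, div_eq_mul_inv, hvmul, hdinv]
      calc ((3 * ι : ℤ) : WithTop ℤ) = ((-2 * ι : ℤ) : WithTop ℤ) + ((5 * ι : ℤ) : WithTop ℤ) := by
            rw [← WithTop.coe_add]; congr 1; ring
      _ ≤ v (a₄ * x + 3 * a₆) + ((5 * ι : ℤ) : WithTop ℤ) := add_le_add hnum le_rfl
    have hu0 : (0 : WithTop ℤ) ≤ v u :=
      le_trans (by exact_mod_cast (by linarith : (0 : ℤ) ≤ 3 * ι)) huv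
    have hup : ((3 * ι : ℤ) : WithTop ℤ) ≤ v (u ^ p) := by
      rw [show u ^ p = u ^ (p - 1) * u by
        rw [← pow_succ, Nat.sub_add_cancel (by omega)], hvmul]
      calc ((3 * ι : ℤ) : WithTop ℤ) = 0 + ((3 * ι : ℤ) : WithTop ℤ) := (zero_add _).symm
      _ ≤ v (u ^ (p - 1)) + v u :=
          add_le_add (aux_v_pow_nonneg hv0 hvmul hu0 (p - 1)) huv
    have hAu : ((3 * ι : ℤ) : WithTop ℤ) ≤ v (A * u) := by
      rw [hvmul]
      calc ((3 * ι : ℤ) : WithTop ℤ) = 0 + ((3 * ι : ℤ) : WithTop ℤ) := (zero_add _).symm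
      _ ≤ v A + v u := add_le_add hA huv
    exact aux_v_sub hv0 hvmul hvadd hup hAu
  · -- second goal
    have hLx : ((-2 * ((p : ℤ) - 2) * ι : ℤ) : WithTop ℤ) ≤ v (L.eval x) := by
      rw [Polynomial.eval_eq_sum_range' hLdeg x]
      refine aux_v_sum hv0 hvadd _ _ _ fun i hi => ?_
      rw [hvmul, aux_v_pow_eq hv0 hvmul hvx i]
      have hi' : i < p - 1 := Finset.mem_range.1 hi
      have hip : (i : ℤ) ≤ (p : ℤ) - 2 := by
        have : i ≤ p - 2 := by omega
        have h2 : (i : ℤ) ≤ ((p - 2 : ℕ) : ℤ) := by exact_mod_cast this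
        omega
      have hterm : ((-2 * ((p : ℤ) - 2) * ι : ℤ) : WithTop ℤ) ≤
          (((i : ℤ) * (-2 * ι) : ℤ) : WithTop ℤ) := by
        rw [WithTop.coe_le_coe]
        nlinarith
      calc ((-2 * ((p : ℤ) - 2) * ι : ℤ) : WithTop ℤ)
          ≤ (((i : ℤ) * (-2 * ι) : ℤ) : WithTop ℤ) := hterm
      _ = 0 + (((i : ℤ) * (-2 * ι) : ℤ) : WithTop ℤ) := (zero_add _).symm
      _ ≤ v (L.coeff i) + (((i : ℤ) * (-2 * ι) : ℤ) : WithTop ℤ) :=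
          add_le_add (hLgood i) le_rfl
    have hxp : v (x ^ p) = (((p : ℤ) * (-2 * ι) : ℤ) : WithTop ℤ) :=
      aux_v_pow_eq hv0 hvmul hvx p
    have hxpinv : v ((x ^ p)⁻¹) = ((-((p : ℤ) * (-2 * ι)) : ℤ) : WithTop ℤ) :=
      aux_v_inv hv0 hvmul hxp
    rw [div_eq_mul_inv, hvmul, hvmul, hvy, hxpinv]
    refine le_trans ?_ (add_le_add (add_le_add le_rfl hLx) le_rfl)
    rw [← WithTop.coe_add, ← WithTop.coe_add, WithTop.coe_le_coe]
    exact le_of_eq (by ring)
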